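/- Let Z = (Z_n)_{n ∈ ℕ} be a discrete-time normal noise on a probability space (Ω, 𝒜, P). Then for every σ ∈ Finset ℕ the random variable Z_σ = ∏_{i ∈ σ} Z_i is square integrable, and for all σ, τ ∈ Finset ℕ, E[Z_σ · Z_τ] = 1 if σ = τ and E[Z_σ · Z_τ] = 0 if σ ≠ τ; i.e., the canonical functional system {Z_σ : σ ∈ Finset ℕ} forms an orthonormal system in L²(Ω, 𝒜, P). -/

import Mathlib

open scoped BigOperators ENNReal
open MeasureTheory Filter Topology

/-- Auxiliary integrability lemma: if `g ≥ 0` is integrable with `E[g|m] ≤ 1` a.e. and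
`F` is `m`-measurable and integrable, then `g * ‖F‖` is integrable. -/
lemma aux_mul_integrable {Ω : Type*} [m0 : MeasurableSpace Ω] {P : Measure Ω}
    [IsProbabilityMeasure P] {m : MeasurableSpace Ω} (hm : m ≤ m0) {g F : Ω → ℝ}
    (hgm : Measurable[m0] g) (hg0 : ∀ ω, 0 ≤ g ω) (hgi : Integrable g P)
    (hFm : StronglyMeasurable[m] F) (hFi : Integrable F P)
    (hC : P[g|m] ≤ᵐ[P] fun _ => (1 : ℝ)) :
    Integrable (fun ω => g ω * ‖F ω‖) P := by
  have hFm' : Measurable[m] F := hFm.measurable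
  have hFk_m' : ∀ k : ℕ, Measurable[m] fun ω => min ‖F ω‖ (k : ℝ) := fun k =>
    hFm'.norm.min measurable_const
  letI : MeasurableSpace Ω := m0
  have hFmeas : Measurable[m0] F := hFm'.mono hm le_rfl
  set Fk : ℕ → Ω → ℝ := fun k ω => min ‖F ω‖ (k : ℝ) with hFkdef
  have hFk_nonneg : ∀ k ω, 0 ≤ Fk k ω := fun k ω => le_min (norm_nonneg _) (Nat.cast_nonneg _)
  have hFk_m : ∀ k, StronglyMeasurable[m] (Fk k) := fun k => (hFk_m' k).stronglyMeasurable
  have hFk_bdd : ∀ k, ∀ᵐ ω ∂P, ‖Fk k ω‖ ≤ (k : ℝ) := by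
    intro k
    refine Eventually.of_forall fun ω => ?_
    rw [Real.norm_eq_abs, abs_of_nonneg (hFk_nonneg k ω)]
    exact min_le_right _ _
  have hint_k : ∀ k, Integrable (fun ω => Fk k ω * g ω) P := fun k =>
    hgi.bdd_mul ((hFk_m k).mono hm).aestronglyMeasurable (hFk_bdd k)
  have hbound : ∀ k, ∫ ω, Fk k ω * g ω ∂P ≤ ∫ ω, ‖F ω‖ ∂P := by
    intro k
    have hce : P[fun ω => Fk k ω * g ω|m] =ᵐ[P] fun ω => Fk k ω * (P[g|m]) ω :=
      condExp_mul_of_stronglyMeasurable_left (hFk_m k) (hint_k k) hgi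
    calc ∫ ω, Fk k ω * g ω ∂P = ∫ ω, (P[fun ω => Fk k ω * g ω|m]) ω ∂P :=
          (integral_condExp hm).symm
      _ = ∫ ω, Fk k ω * (P[g|m]) ω ∂P := integral_congr_ae hce
      _ ≤ ∫ ω, ‖F ω‖ ∂P := by
          refine integral_mono_ae (integrable_condExp.bdd_mul
            ((hFk_m k).mono hm).aestronglyMeasurable (hFk_bdd k)) hFi.norm ?_
          filter_upwards [hC, condExp_nonneg (μ := P) (m := m)
            (Eventually.of_forall hg0)] with ω h1 h2
          calc Fk k ω * (P[g|m]) ω ≤ Fk k ω * 1 :=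
                mul_le_mul_of_nonneg_left h1 (hFk_nonneg k ω)
            _ ≤ ‖F ω‖ := by rw [mul_one]; exact min_le_left _ _
  have hasm : AEStronglyMeasurable (fun ω => g ω * ‖F ω‖) P :=
    Measurable.aestronglyMeasurable (hgm.mul hFmeas.norm)
  refine ⟨hasm, ?_⟩
  rw [hasFiniteIntegral_iff_ofReal (Eventually.of_forall fun ω =>
    mul_nonneg (hg0 ω) (norm_nonneg _))]
  have hmono : Monotone fun k : ℕ => fun ω => ENNReal.ofReal (Fk k ω * g ω) := by
    intro a b hab ω
    exact ENNReal.ofReal_le_ofReal (mul_le_mul_of_nonneg_right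
      (min_le_min le_rfl (Nat.cast_le.mpr hab)) (hg0 ω))
  have hmFk : ∀ k, Measurable[m0] (Fk k) := fun k => hFmeas.norm.min measurable_const
  have hmeask : ∀ k, Measurable[m0] fun ω => ENNReal.ofReal (Fk k ω * g ω) := fun k =>
    Measurable.ennreal_ofReal ((hmFk k).mul hgm)
  have key : ∫⁻ ω, ENNReal.ofReal (g ω * ‖F ω‖) ∂P
      = ⨆ k, ∫⁻ ω, ENNReal.ofReal (Fk k ω * g ω) ∂P := by
    rw [← lintegral_iSup hmeask hmono]
    refine lintegral_congr fun ω => ?_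
    have hmono' : Monotone fun k : ℕ => ENNReal.ofReal (Fk k ω * g ω) :=
      fun a b hab => hmono hab ω
    have htend : Tendsto (fun k : ℕ => ENNReal.ofReal (Fk k ω * g ω)) atTop
        (𝓝 (ENNReal.ofReal (g ω * ‖F ω‖))) := by
      apply tendsto_atTop_of_eventually_const (i₀ := ⌈‖F ω‖⌉₊)
      intro k hk
      have h : ‖F ω‖ ≤ (k : ℝ) := (Nat.le_ceil _).trans (Nat.cast_le.mpr hk)
      rw [show Fk k ω = ‖F ω‖ from min_eq_left h, mul_comm]
    exact (tendsto_nhds_unique (tendsto_atTop_iSup hmono') htend).symm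
  rw [key]
  refine lt_of_le_of_lt (iSup_le fun k => ?_) (ENNReal.ofReal_lt_top : ENNReal.ofReal (∫ ω, ‖F ω‖ ∂P) < ⊤)
  rw [← ofReal_integral_eq_lintegral_ofReal (hint_k k)
    (Eventually.of_forall fun ω => mul_nonneg (hFk_nonneg k ω) (hg0 ω))]
  exact ENNReal.ofReal_le_ofReal (hbound k)

/-- A discrete-time normal noise: `Z = (Z_n)` with `E[Z_n | ℱ_{n-1}] = 0` and
`E[Z_n² | ℱ_{n-1}] = 1` a.s., where `ℱ_{-1}` is the trivial σ-algebra and `ℱ_n` is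
generated by `Z_0, …, Z_n`. Its canonical functional system `Z_σ = ∏_{i ∈ σ} Z_i`
is an orthonormal system in `L²`. -/
theorem stmt16 {Ω : Type*} [m0 : MeasurableSpace Ω] (P : Measure Ω)
    [IsProbabilityMeasure P] (Z : ℕ → Ω → ℝ)
    (hmeas : ∀ n, Measurable (Z n))
    (hint : ∀ n, Integrable (Z n) P)
    (hint2 : ∀ n, Integrable (fun ω => (Z n ω) ^ 2) P)
    (G : ℕ → MeasurableSpace Ω)
    (hG0 : G 0 = ⊥)
    (hGs : ∀ n, G (n + 1) =
      ⨆ i ∈ Finset.range (n + 1), MeasurableSpace.comap (Z i) (inferInstance : MeasurableSpace ℝ))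
    (hzero : ∀ n, P[Z n|G n] =ᵐ[P] 0)
    (hone : ∀ n, P[fun ω => (Z n ω) ^ 2|G n] =ᵐ[P] fun _ => 1) :
    (∀ σ : Finset ℕ, MemLp (fun ω => ∏ i ∈ σ, Z i ω) 2 P) ∧
    (∀ σ τ : Finset ℕ,
      ∫ ω, (∏ i ∈ σ, Z i ω) * (∏ i ∈ τ, Z i ω) ∂P = if σ = τ then 1 else 0) := by
  classical
  have hGle : ∀ n, G n ≤ m0 := by
    intro n
    cases n with
    | zero => rw [hG0]; exact bot_le
    | succ n =>
      rw [hGs n]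
      exact iSup₂_le fun i _ => measurable_iff_comap_le.mp (hmeas i)
  have hZG : ∀ n i, i < n → Measurable[G n] (Z i) := by
    intro n i hi
    cases n with
    | zero => omega
    | succ n =>
      rw [hGs n]
      have h1 : Measurable[MeasurableSpace.comap (Z i) inferInstance] (Z i) :=
        measurable_iff_comap_le.mpr le_rfl
      exact h1.mono (le_iSup₂ (f := fun i (_ : i ∈ Finset.range (n + 1)) =>
        MeasurableSpace.comap (Z i) inferInstance) i (Finset.mem_range.mpr hi)) le_rfl
  have hprod : ∀ n (σ : Finset ℕ), σ ⊆ Finset.range n →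
      StronglyMeasurable[G n] (fun ω => ∏ i ∈ σ, Z i ω) := by
    intro n σ hσ
    exact Measurable.stronglyMeasurable
      (Finset.measurable_prod σ fun i hi => hZG n i (Finset.mem_range.mp (hσ hi)))
  have hmprod : ∀ σ : Finset ℕ, Measurable fun ω => ∏ i ∈ σ, Z i ω := fun σ =>
    Finset.measurable_prod σ fun i _ => hmeas i
  -- bound on the conditional expectation of |Z n|
  have habs : ∀ n, P[(fun ω => |Z n ω|)|G n] ≤ᵐ[P] fun _ => (1 : ℝ) := by
    intro n
    set b1 : Ω → ℝ := (2⁻¹ : ℝ) • fun ω => Z n ω ^ 2 with hb1def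
    set b : Ω → ℝ := b1 + fun _ => (2⁻¹ : ℝ) with hbdef
    have hb1int : Integrable b1 P := (hint2 n).smul (2⁻¹ : ℝ)
    have hbint : Integrable b P := hb1int.add (integrable_const _)
    have hle : (fun ω => |Z n ω|) ≤ᵐ[P] b := by
      refine Eventually.of_forall fun ω => ?_
      simp only [hbdef, hb1def, Pi.add_apply, Pi.smul_apply, smul_eq_mul]
      nlinarith [sq_nonneg (|Z n ω| - 1), sq_abs (Z n ω)]
    have e1 : P[b|G n] =ᵐ[P] fun _ => (1 : ℝ) := by
      have hadd : P[b|G n] =ᵐ[P] P[b1|G n] + P[fun _ => (2⁻¹ : ℝ)|G n] :=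
        condExp_add hb1int (integrable_const _) _
      have hsmul : P[b1|G n] =ᵐ[P] (2⁻¹ : ℝ) • P[fun ω => Z n ω ^ 2|G n] :=
        condExp_smul (μ := P) (m := G n) (2⁻¹ : ℝ) fun ω => Z n ω ^ 2
      have hconst : P[fun _ => (2⁻¹ : ℝ)|G n] = fun _ => (2⁻¹ : ℝ) :=
        condExp_const (hGle n) _
      filter_upwards [hadd, hsmul, hone n] with ω h1 h2 h3
      rw [h1]
      simp only [Pi.add_apply, hconst]
      rw [h2]
      simp only [Pi.smul_apply, smul_eq_mul, h3]
      norm_num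
    exact (condExp_mono (hint n).abs hbint hle).trans e1.le
  -- the key induction
  have key : ∀ n, ∀ σ τ : Finset ℕ, σ ⊆ Finset.range n → τ ⊆ Finset.range n →
      Integrable (fun ω => (∏ i ∈ σ, Z i ω) * ∏ i ∈ τ, Z i ω) P ∧
      ∫ ω, (∏ i ∈ σ, Z i ω) * (∏ i ∈ τ, Z i ω) ∂P = if σ = τ then 1 else 0 := by
    intro n
    induction n with
    | zero =>
      intro σ τ hσ hτ
      rw [Finset.range_zero, Finset.subset_empty] at hσ hτ
      subst hσ; subst hτ
      refine ⟨by simp only [Finset.prod_empty, mul_one]; exact integrable_const (1 : ℝ), ?_⟩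
      simp
    | succ n IH =>
      intro σ τ hσ hτ
      have herase : ∀ ρ : Finset ℕ, ρ ⊆ Finset.range (n + 1) →
          ρ.erase n ⊆ Finset.range n := by
        intro ρ hρ i hi
        rcases Finset.mem_erase.mp hi with ⟨hne, hmem⟩
        have := Finset.mem_range.mp (hρ hmem)
        exact Finset.mem_range.mpr (by omega)
      have hnot : ∀ ρ : Finset ℕ, ρ ⊆ Finset.range (n + 1) → n ∉ ρ →
          ρ ⊆ Finset.range n := by
        intro ρ hρ hn i hi
        have h1 := Finset.mem_range.mp (hρ hi)
        have h2 : i ≠ n := fun h => hn (h ▸ hi)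
        exact Finset.mem_range.mpr (by omega)
      by_cases hnσ : n ∈ σ <;> by_cases hnτ : n ∈ τ
      · -- n ∈ σ, n ∈ τ
        obtain ⟨hFi, hFint⟩ := IH (σ.erase n) (τ.erase n) (herase σ hσ) (herase τ hτ)
        set F := fun ω => (∏ i ∈ σ.erase n, Z i ω) * ∏ i ∈ τ.erase n, Z i ω with hFdef
        have hFm : StronglyMeasurable[G n] F :=
          (hprod n _ (herase σ hσ)).mul (hprod n _ (herase τ hτ))
        have heq : ∀ ω, (∏ i ∈ σ, Z i ω) * ∏ i ∈ τ, Z i ω = Z n ω ^ 2 * F ω := by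
          intro ω
          rw [← Finset.mul_prod_erase σ _ hnσ, ← Finset.mul_prod_erase τ _ hnτ, hFdef]
          ring
        have haux : Integrable (fun ω => Z n ω ^ 2 * ‖F ω‖) P :=
          aux_mul_integrable (hGle n) ((hmeas n).pow_const 2) (fun ω => sq_nonneg _)
            (hint2 n) hFm hFi (hone n).le
        have hint_prod : Integrable (fun ω => (∏ i ∈ σ, Z i ω) * ∏ i ∈ τ, Z i ω) P := by
          refine Integrable.mono' haux
            ((hmprod σ).mul (hmprod τ)).aestronglyMeasurable ?_
          refine Eventually.of_forall fun ω => ?_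
          show ‖(∏ i ∈ σ, Z i ω) * ∏ i ∈ τ, Z i ω‖ ≤ Z n ω ^ 2 * ‖F ω‖
          rw [heq ω, norm_mul, Real.norm_eq_abs (Z n ω ^ 2), abs_of_nonneg (sq_nonneg (Z n ω))]
        have h2 : Integrable (fun ω => F ω * Z n ω ^ 2) P :=
          hint_prod.congr (Eventually.of_forall fun ω => (heq ω).trans (mul_comm _ _))
        have hce : P[fun ω => F ω * Z n ω ^ 2|G n]
            =ᵐ[P] fun ω => F ω * (P[fun ω => Z n ω ^ 2|G n]) ω :=
          condExp_mul_of_stronglyMeasurable_left hFm h2 (hint2 n)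
        refine ⟨hint_prod, ?_⟩
        calc ∫ ω, (∏ i ∈ σ, Z i ω) * ∏ i ∈ τ, Z i ω ∂P
            = ∫ ω, F ω * Z n ω ^ 2 ∂P :=
              integral_congr_ae (Eventually.of_forall fun ω => (heq ω).trans (mul_comm _ _))
          _ = ∫ ω, (P[fun ω => F ω * Z n ω ^ 2|G n]) ω ∂P := (integral_condExp (hGle n)).symm
          _ = ∫ ω, F ω ∂P := by
              refine integral_congr_ae (hce.trans ?_)
              filter_upwards [hone n] with ω h1
              rw [h1]; simp
          _ = if σ.erase n = τ.erase n then 1 else 0 := hFint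
          _ = if σ = τ then 1 else 0 := by
              by_cases h : σ = τ
              · rw [if_pos (by rw [h]), if_pos h]
              · rw [if_neg (fun hc => h (by
                  rw [← Finset.insert_erase hnσ, ← Finset.insert_erase hnτ, hc])), if_neg h]
      · -- n ∈ σ, n ∉ τ
        obtain ⟨hFi, _⟩ := IH (σ.erase n) τ (herase σ hσ) (hnot τ hτ hnτ)
        set F := fun ω => (∏ i ∈ σ.erase n, Z i ω) * ∏ i ∈ τ, Z i ω with hFdef
        have hFm : StronglyMeasurable[G n] F :=
          (hprod n _ (herase σ hσ)).mul (hprod n _ (hnot τ hτ hnτ))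
        have heq : ∀ ω, (∏ i ∈ σ, Z i ω) * ∏ i ∈ τ, Z i ω = Z n ω * F ω := by
          intro ω
          rw [← Finset.mul_prod_erase σ _ hnσ, hFdef]
          ring
        have haux : Integrable (fun ω => |Z n ω| * ‖F ω‖) P :=
          aux_mul_integrable (hGle n) (hmeas n).abs (fun ω => abs_nonneg _)
            (hint n).abs hFm hFi (habs n)
        have hint_prod : Integrable (fun ω => (∏ i ∈ σ, Z i ω) * ∏ i ∈ τ, Z i ω) P := by
          refine Integrable.mono' haux
            ((hmprod σ).mul (hmprod τ)).aestronglyMeasurable ?_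
          refine Eventually.of_forall fun ω => ?_
          show ‖(∏ i ∈ σ, Z i ω) * ∏ i ∈ τ, Z i ω‖ ≤ |Z n ω| * ‖F ω‖
          rw [heq ω, norm_mul, Real.norm_eq_abs (Z n ω)]
        have h2 : Integrable (fun ω => F ω * Z n ω) P :=
          hint_prod.congr (Eventually.of_forall fun ω => (heq ω).trans (mul_comm _ _))
        have hce : P[fun ω => F ω * Z n ω|G n]
            =ᵐ[P] fun ω => F ω * (P[Z n|G n]) ω :=
          condExp_mul_of_stronglyMeasurable_left hFm h2 (hint n)
        refine ⟨hint_prod, ?_⟩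
        have hne : σ ≠ τ := fun h => hnτ (h ▸ hnσ)
        rw [if_neg hne]
        calc ∫ ω, (∏ i ∈ σ, Z i ω) * ∏ i ∈ τ, Z i ω ∂P
            = ∫ ω, F ω * Z n ω ∂P :=
              integral_congr_ae (Eventually.of_forall fun ω => (heq ω).trans (mul_comm _ _))
          _ = ∫ ω, (P[fun ω => F ω * Z n ω|G n]) ω ∂P := (integral_condExp (hGle n)).symm
          _ = ∫ ω, (0 : ℝ) ∂P := by
              refine integral_congr_ae (hce.trans ?_)
              filter_upwards [hzero n] with ω h1
              rw [h1]; simp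
          _ = 0 := integral_zero _ _
      · -- n ∉ σ, n ∈ τ
        obtain ⟨hFi, _⟩ := IH σ (τ.erase n) (hnot σ hσ hnσ) (herase τ hτ)
        set F := fun ω => (∏ i ∈ σ, Z i ω) * ∏ i ∈ τ.erase n, Z i ω with hFdef
        have hFm : StronglyMeasurable[G n] F :=
          (hprod n _ (hnot σ hσ hnσ)).mul (hprod n _ (herase τ hτ))
        have heq : ∀ ω, (∏ i ∈ σ, Z i ω) * ∏ i ∈ τ, Z i ω = Z n ω * F ω := by
          intro ω
          rw [← Finset.mul_prod_erase τ _ hnτ, hFdef]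
          ring
        have haux : Integrable (fun ω => |Z n ω| * ‖F ω‖) P :=
          aux_mul_integrable (hGle n) (hmeas n).abs (fun ω => abs_nonneg _)
            (hint n).abs hFm hFi (habs n)
        have hint_prod : Integrable (fun ω => (∏ i ∈ σ, Z i ω) * ∏ i ∈ τ, Z i ω) P := by
          refine Integrable.mono' haux
            ((hmprod σ).mul (hmprod τ)).aestronglyMeasurable ?_
          refine Eventually.of_forall fun ω => ?_
          show ‖(∏ i ∈ σ, Z i ω) * ∏ i ∈ τ, Z i ω‖ ≤ |Z n ω| * ‖F ω‖
          rw [heq ω, norm_mul, Real.norm_eq_abs (Z n ω)]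
        have h2 : Integrable (fun ω => F ω * Z n ω) P :=
          hint_prod.congr (Eventually.of_forall fun ω => (heq ω).trans (mul_comm _ _))
        have hce : P[fun ω => F ω * Z n ω|G n]
            =ᵐ[P] fun ω => F ω * (P[Z n|G n]) ω :=
          condExp_mul_of_stronglyMeasurable_left hFm h2 (hint n)
        refine ⟨hint_prod, ?_⟩
        have hne : σ ≠ τ := fun h => hnσ (h ▸ hnτ)
        rw [if_neg hne]
        calc ∫ ω, (∏ i ∈ σ, Z i ω) * ∏ i ∈ τ, Z i ω ∂P
            = ∫ ω, F ω * Z n ω ∂P :=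
              integral_congr_ae (Eventually.of_forall fun ω => (heq ω).trans (mul_comm _ _))
          _ = ∫ ω, (P[fun ω => F ω * Z n ω|G n]) ω ∂P := (integral_condExp (hGle n)).symm
          _ = ∫ ω, (0 : ℝ) ∂P := by
              refine integral_congr_ae (hce.trans ?_)
              filter_upwards [hzero n] with ω h1
              rw [h1]; simp
          _ = 0 := integral_zero _ _
      · -- n ∉ σ, n ∉ τ
        exact IH σ τ (hnot σ hσ hnσ) (hnot τ hτ hnτ)
  constructor
  · intro σ
    have hσsub : σ ⊆ Finset.range (σ.sup id + 1) := fun i hi =>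
      Finset.mem_range.mpr (Nat.lt_succ_of_le (Finset.le_sup (f := id) hi))
    obtain ⟨h1, _⟩ := key _ σ σ hσsub hσsub
    rw [memLp_two_iff_integrable_sq (hmprod σ).aestronglyMeasurable]
    exact h1.congr (Eventually.of_forall fun ω => (pow_two _).symm)
  · intro σ τ
    have hσsub : σ ⊆ Finset.range ((σ ∪ τ).sup id + 1) := fun i hi =>
      Finset.mem_range.mpr (Nat.lt_succ_of_le (Finset.le_sup (f := id)
        (Finset.mem_union_left _ hi)))
    have hτsub : τ ⊆ Finset.range ((σ ∪ τ).sup id + 1) := fun i hi =>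
      Finset.mem_range.mpr (Nat.lt_succ_of_le (Finset.le_sup (f := id)
        (Finset.mem_union_right _ hi)))
    exact (key _ σ τ hσsub hτsub).2
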